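/- Let G = (V,E) be a d-regular graph with d ≥ 3, equipped with an edge-signing w : E → {±1}; let A be its signed adjacency matrix and B its signed non-backtracking matrix. If A has an eigenvalue of magnitude 2√(d−1) + ε for some ε ≥ 0, then B has an eigenvalue of magnitude √(d−1) + √ε·√(√(d−1) + ε/4) + ε/2. -/

import Mathlib

open scoped Classical

namespace NearRamanujan

variable {V : Type*} [Fintype V] [DecidableEq V]

private lemma spec_iff {n : Type*} [Fintype n] [DecidableEq n] (M : Matrix n n ℂ) (μ : ℂ) :
    μ ∈ spectrum ℂ M ↔ ∃ x ≠ 0, M.mulVec x = μ • x := by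
  have key : ∀ x, (algebraMap ℂ (Matrix n n ℂ) μ - M).mulVec x = μ • x - M.mulVec x := by
    intro x
    rw [Matrix.sub_mulVec]
    congr 1
    ext i
    simp [Matrix.algebraMap_eq_diagonal, Matrix.mulVec_diagonal]
  rw [spectrum.mem_iff, Matrix.isUnit_iff_isUnit_det, isUnit_iff_ne_zero, not_not,
    ← Matrix.exists_mulVec_eq_zero_iff]
  constructor
  · rintro ⟨x, hx, h⟩
    exact ⟨x, hx, by rw [key] at h; exact (sub_eq_zero.mp h).symm⟩
  · rintro ⟨x, hx, h⟩
    exact ⟨x, hx, by rw [key, h, sub_self]⟩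

private lemma eig_real {n : Type*} [Fintype n] (M : Matrix n n ℂ) (μ : ℂ)
    (hM : ∀ i j, (starRingEnd ℂ) (M i j) = M j i)
    (x : n → ℂ) (hx : x ≠ 0) (h : M.mulVec x = μ • x) :
    (starRingEnd ℂ) μ = μ := by
  set c : ℂ := ∑ i, (starRingEnd ℂ) (x i) * x i with hc
  have hcval : c = ((∑ i, Complex.normSq (x i) : ℝ) : ℂ) := by
    rw [hc]
    push_cast
    exact Finset.sum_congr rfl fun i _ => by rw [mul_comm, Complex.mul_conj]
  have hcre : (starRingEnd ℂ) c = c := by rw [hcval, Complex.conj_ofReal]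
  have hcne : c ≠ 0 := by
    have : ∃ i, x i ≠ 0 := by
      by_contra hcon
      push_neg at hcon
      exact hx (funext hcon)
    obtain ⟨i, hi⟩ := this
    have hpos : 0 < ∑ j, Complex.normSq (x j) :=
      Finset.sum_pos' (fun j _ => Complex.normSq_nonneg _)
        ⟨i, Finset.mem_univ i, Complex.normSq_pos.mpr hi⟩
    rw [hcval]
    exact_mod_cast hpos.ne'
  set q : ℂ := ∑ i, (starRingEnd ℂ) (x i) * (M.mulVec x i) with hq
  have hq1 : q = μ * c := by
    rw [hq, hc, Finset.mul_sum]
    refine Finset.sum_congr rfl fun i _ => ?_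
    rw [h]; simp [Pi.smul_apply]; ring
  have hq2 : (starRingEnd ℂ) q = q := by
    simp only [hq, map_sum, map_mul, RingHomCompTriple.comp_apply, RingHom.id_apply,
      Matrix.mulVec, dotProduct, Finset.mul_sum]
    rw [Finset.sum_comm]
    refine Finset.sum_congr rfl fun j _ => Finset.sum_congr rfl fun i _ => ?_
    rw [hM]
    ring
  have key : (starRingEnd ℂ) μ * c = μ * c := by
    calc (starRingEnd ℂ) μ * c = (starRingEnd ℂ) μ * (starRingEnd ℂ) c := by rw [hcre]
    _ = (starRingEnd ℂ) q := by rw [hq1, map_mul]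
    _ = q := hq2
    _ = μ * c := hq1
  exact mul_right_cancel₀ hcne key

private lemma dart_sum (G : SimpleGraph V) (u : V) (F : V → ℂ) :
    ∑ f : G.Dart, (if f.fst = u then F f.snd else 0) = ∑ v ∈ G.neighborFinset u, F v := by
  rw [← Finset.sum_filter]
  refine Finset.sum_bij (fun f _ => f.snd) ?_ ?_ ?_ ?_
  · intro f hf
    simp only [Finset.mem_filter, Finset.mem_univ, true_and] at hf
    rw [SimpleGraph.mem_neighborFinset]
    exact hf ▸ f.adj
  · intro f₁ hf₁ f₂ hf₂ h
    simp only [Finset.mem_filter, Finset.mem_univ, true_and] at hf₁ hf₂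
    ext
    · rw [hf₁, hf₂]
    · exact h
  · intro v hv
    rw [SimpleGraph.mem_neighborFinset] at hv
    exact ⟨⟨(u, v), hv⟩, by simp, rfl⟩
  · intro f hf
    rfl

private lemma real_arith (D ε : ℝ) (hD : 2 ≤ D) (hε : 0 ≤ ε) :
    (2*Real.sqrt D + ε + Real.sqrt (ε*(4*Real.sqrt D+ε)))/2
      * ((2*Real.sqrt D + ε + Real.sqrt (ε*(4*Real.sqrt D+ε)))/2)
      - (2*Real.sqrt D + ε) * ((2*Real.sqrt D + ε + Real.sqrt (ε*(4*Real.sqrt D+ε)))/2) + D = 0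
    ∧ (2*Real.sqrt D + ε + Real.sqrt (ε*(4*Real.sqrt D+ε)))/2
        = Real.sqrt D + Real.sqrt ε * Real.sqrt (Real.sqrt D + ε/4) + ε/2
    ∧ 1 < (2*Real.sqrt D + ε + Real.sqrt (ε*(4*Real.sqrt D+ε)))/2 := by
  set s := Real.sqrt D with hsdef
  have hs0 : 0 ≤ s := Real.sqrt_nonneg D
  have hs2 : s^2 = D := Real.sq_sqrt (by linarith)
  have hs1 : 1 < s := by nlinarith
  have hdisc : 0 ≤ ε*(4*s+ε) := by positivity
  have hsq : Real.sqrt (ε*(4*s+ε)) ^ 2 = ε*(4*s+ε) := Real.sq_sqrt hdisc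
  have hsqnn : 0 ≤ Real.sqrt (ε*(4*s+ε)) := Real.sqrt_nonneg _
  refine ⟨by nlinarith, ?_, by linarith⟩
  have h1 : Real.sqrt (ε*(4*s+ε)) = Real.sqrt ε * Real.sqrt (4*s+ε) := Real.sqrt_mul hε _
  have h2 : Real.sqrt (4*s+ε) = 2 * Real.sqrt (s + ε/4) := by
    rw [show (4*s+ε) = 4*(s+ε/4) by ring, show (4:ℝ) = 2^2 by norm_num,
      Real.sqrt_mul (by positivity), Real.sqrt_sq (by norm_num)]
  rw [h1, h2]
  ring

/-- The signed adjacency matrix of `G` equipped with the edge-signing `σ`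
(`σ e = true` meaning sign `+1`, `σ e = false` meaning sign `-1`). -/
noncomputable def signedAdjT (G : SimpleGraph V) (σ : Sym2 V → Bool) : Matrix V V ℂ :=
  fun u v => if G.Adj u v then (if σ s(u, v) then 1 else -1) else 0

/-- The signed non-backtracking matrix of `G` equipped with the edge-signing `σ`,
indexed by the darts (directed edges) of `G`. -/
noncomputable def nbMatrixT (G : SimpleGraph V) (σ : Sym2 V → Bool) : Matrix G.Dart G.Dart ℂ :=
  fun e f => if e.snd = f.fst ∧ f.snd ≠ e.fst then (if σ s(f.fst, f.snd) then 1 else -1) else 0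

/-- Corollary 2.12.  Let `G` be a `d`-regular graph (`d ≥ 3`) with an
edge-signing, `A` its signed adjacency matrix and `B` its signed non-backtracking matrix.
If `A` has an eigenvalue of magnitude `2√(d−1) + ε` for some `ε ≥ 0`, then `B` has an
eigenvalue of magnitude `√(d−1) + √ε·√(√(d−1) + ε/4) + ε/2`. -/
theorem nb_eigenvalue_of_adjacency_eigenvalue
    (G : SimpleGraph V) (d : ℕ) (hd : 3 ≤ d) (hreg : ∀ v, G.degree v = d)
    (σ : Sym2 V → Bool) (ε : ℝ) (hε : 0 ≤ ε)
    (hA : ∃ μ ∈ spectrum ℂ (signedAdjT G σ),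
            ‖μ‖ = 2 * Real.sqrt ((d : ℝ) - 1) + ε) :
    ∃ ν ∈ spectrum ℂ (nbMatrixT G σ),
      ‖ν‖
        = Real.sqrt ((d : ℝ) - 1)
            + Real.sqrt ε * Real.sqrt (Real.sqrt ((d : ℝ) - 1) + ε / 4) + ε / 2 := by
  -- set up the basic real quantities
  set D : ℝ := (d : ℝ) - 1 with hDdef
  have hD : 2 ≤ D := by
    rw [hDdef]
    have : (3 : ℝ) ≤ (d : ℝ) := by exact_mod_cast hd
    linarith
  obtain ⟨hquadR, hrval, hr1⟩ := real_arith D ε hD hε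
  set s : ℝ := Real.sqrt D with hsdef
  set m : ℝ := 2 * s + ε with hmdef
  set r : ℝ := (2*s + ε + Real.sqrt (ε*(4*s+ε)))/2 with hrdef
  have hr0 : 0 < r := lt_trans one_pos hr1
  -- obtain the eigenvalue and eigenvector of A
  obtain ⟨μ, hμspec, hμabs⟩ := hA
  obtain ⟨x, hx0, hxeig⟩ := (spec_iff _ μ).mp hμspec
  -- μ is real
  have hherm : ∀ i j, (starRingEnd ℂ) (signedAdjT G σ i j) = signedAdjT G σ j i := by
    intro i j
    simp only [signedAdjT]
    by_cases h : G.Adj i j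
    · rw [if_pos h, if_pos h.symm, Sym2.eq_swap]
      by_cases hσ : σ s(j, i) <;> simp [hσ]
    · rw [if_neg h, if_neg (fun hh => h hh.symm)]
      simp
  have hμreal : (starRingEnd ℂ) μ = μ := eig_real _ μ hherm x hx0 hxeig
  have hμre : ((μ.re : ℝ) : ℂ) = μ := Complex.conj_eq_iff_re.mp hμreal
  have habs_re : |μ.re| = m := by
    calc |μ.re| = ‖((μ.re : ℝ) : ℂ)‖ := by rw [Complex.norm_real, Real.norm_eq_abs]
      _ = ‖μ‖ := by rw [hμre]
      _ = m := hμabs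
  obtain ⟨t, ht, hμt⟩ : ∃ t : ℝ, (t = 1 ∨ t = -1) ∧ μ.re = t * m := by
    rcases (abs_eq (by positivity : (0:ℝ) ≤ m)).mp habs_re with h | h
    · exact ⟨1, Or.inl rfl, by rw [one_mul]; exact h⟩
    · exact ⟨-1, Or.inr rfl, by rw [neg_one_mul]; exact h⟩
  have ht2 : t * t = 1 := by rcases ht with h | h <;> rw [h] <;> norm_num
  -- the candidate eigenvalue of B
  set ν : ℂ := ((t * r : ℝ) : ℂ) with hνdef
  have hνabs : ‖ν‖ = r := by
    rw [hνdef, Complex.norm_real, Real.norm_eq_abs, abs_mul, abs_of_pos hr0]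
    rcases ht with h | h <;> rw [h] <;> norm_num
  have htne : t ≠ 0 := by rcases ht with h | h <;> rw [h] <;> norm_num
  have hν0 : ν ≠ 0 := by
    rw [hνdef]
    exact_mod_cast Complex.ofReal_ne_zero.mpr (mul_ne_zero htne hr0.ne')
  -- the quadratic relation over ℂ
  have hquadC : ν * ν - μ * ν + ((d : ℂ) - 1) = 0 := by
    have hμval : μ = ((t * m : ℝ) : ℂ) := by rw [← hμre, hμt]
    rw [hμval, hνdef]
    have : ((t*r) * (t*r) - (t*m) * (t*r) + D : ℝ) = 0 := by
      have expand : (t*r) * (t*r) - (t*m) * (t*r) + D = (t*t) * (r*r - m*r) + D := by ring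
      rw [expand, ht2, one_mul]
      rw [hmdef] at hquadR ⊢
      linarith [hquadR]
    have := congrArg (fun z : ℝ => (z : ℂ)) this
    push_cast at this ⊢
    rw [hDdef] at this
    push_cast at this
    linear_combination this
  -- the sign function
  set W : V → V → ℂ := fun a b => if σ s(a, b) then 1 else -1 with hWdef
  have hWsymm : ∀ a b, W a b = W b a := by
    intro a b
    simp only [hWdef, Sym2.eq_swap]
  have hWsq : ∀ a b, W a b * W a b = 1 := by
    intro a b
    simp only [hWdef]
    by_cases h : σ s(a, b) <;> simp [h]
  -- the eigenvector for B
  set y : G.Dart → ℂ := fun f => x f.snd - ν⁻¹ * W f.fst f.snd * x f.fst with hydef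
  -- compute B.mulVec y
  have heig : (nbMatrixT G σ).mulVec y = ν • y := by
    funext e
    have hBrow : ∀ f : G.Dart, nbMatrixT G σ e f * y f =
        if f.fst = e.snd then
          (if f.snd = e.fst then 0 else W e.snd f.snd * x f.snd - ν⁻¹ * x e.snd) else 0 := by
      intro f
      by_cases h1 : f.fst = e.snd
      · by_cases h2 : f.snd = e.fst
        · rw [if_pos h1, if_pos h2]
          have hz : nbMatrixT G σ e f = 0 := by
            simp only [nbMatrixT]
            exact if_neg (fun hc => hc.2 h2)
          rw [hz, zero_mul]
        · rw [if_pos h1, if_neg h2]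
          have : nbMatrixT G σ e f = W f.fst f.snd := by
            simp only [nbMatrixT, hWdef]
            rw [if_pos ⟨h1.symm, h2⟩]
          rw [this, hydef]
          simp only
          rw [h1]
          have hw := hWsq e.snd f.snd
          linear_combination (-(ν⁻¹ * x e.snd)) * hw
      · rw [if_neg h1]
        have : nbMatrixT G σ e f = 0 := by
          simp only [nbMatrixT]
          rw [if_neg (by tauto : ¬(e.snd = f.fst ∧ f.snd ≠ e.fst))]
        rw [this, zero_mul]
    have hstep1 : (nbMatrixT G σ).mulVec y e
        = ∑ v ∈ G.neighborFinset e.snd,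
            (if v = e.fst then 0 else W e.snd v * x v - ν⁻¹ * x e.snd) := by
      rw [Matrix.mulVec, dotProduct]
      rw [Finset.sum_congr rfl (fun f _ => hBrow f)]
      exact dart_sum G e.snd
        (fun v => if v = e.fst then 0 else W e.snd v * x v - ν⁻¹ * x e.snd)
    -- split the sum
    have hmem : e.fst ∈ G.neighborFinset e.snd := by
      rw [SimpleGraph.mem_neighborFinset]
      exact e.adj.symm
    have hsplit : ∑ v ∈ G.neighborFinset e.snd,
          (if v = e.fst then 0 else W e.snd v * x v - ν⁻¹ * x e.snd)
        = (∑ v ∈ G.neighborFinset e.snd, (W e.snd v * x v - ν⁻¹ * x e.snd))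
          - (W e.snd e.fst * x e.fst - ν⁻¹ * x e.snd) := by
      rw [← Finset.add_sum_erase _ _ hmem, ← Finset.add_sum_erase _ _ hmem]
      rw [if_pos rfl]
      have : ∀ g : V → ℂ, ∑ v ∈ (G.neighborFinset e.snd).erase e.fst,
          (if v = e.fst then 0 else g v) = ∑ v ∈ (G.neighborFinset e.snd).erase e.fst, g v := by
        intro g
        refine Finset.sum_congr rfl fun v hv => ?_
        rw [if_neg (Finset.ne_of_mem_erase hv)]
      rw [this]
      ring
    have hAx : ∑ v ∈ G.neighborFinset e.snd, W e.snd v * x v = μ * x e.snd := by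
      have hmv : (signedAdjT G σ).mulVec x e.snd = μ * x e.snd := by
        rw [hxeig]; simp [Pi.smul_apply]
      have h1 : ∀ v, signedAdjT G σ e.snd v * x v
          = if v ∈ G.neighborFinset e.snd then W e.snd v * x v else 0 := by
        intro v
        by_cases h : G.Adj e.snd v
        · rw [if_pos ((SimpleGraph.mem_neighborFinset _ _ _).mpr h)]
          simp only [signedAdjT, hWdef, if_pos h]
        · rw [if_neg (fun hc => h ((SimpleGraph.mem_neighborFinset _ _ _).mp hc))]
          simp only [signedAdjT, if_neg h, zero_mul]
      rw [← hmv, Matrix.mulVec, dotProduct,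
        Finset.sum_congr rfl (fun v _ => h1 v), Finset.sum_ite_mem, Finset.univ_inter]
    have hcard : (G.neighborFinset e.snd).card = d := by
      rw [SimpleGraph.card_neighborFinset_eq_degree]
      exact hreg e.snd
    have hconst : ∑ _v ∈ G.neighborFinset e.snd, (ν⁻¹ * x e.snd) = (d : ℂ) * (ν⁻¹ * x e.snd) := by
      rw [Finset.sum_const, hcard]
      simp [nsmul_eq_mul]
    -- put it together
    have hBy : (nbMatrixT G σ).mulVec y e
        = μ * x e.snd - (d : ℂ) * (ν⁻¹ * x e.snd) - W e.snd e.fst * x e.fst + ν⁻¹ * x e.snd := by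
      rw [hstep1, hsplit, Finset.sum_sub_distrib, hAx, hconst]
      ring
    rw [hBy]
    show _ = ν * y e
    rw [hydef]
    simp only
    rw [hWsymm e.fst e.snd]
    have hinv : ν * ν⁻¹ = 1 := mul_inv_cancel₀ hν0
    have hquad' : μ - ((d : ℂ) - 1) * ν⁻¹ = ν := by
      field_simp
      linear_combination -hquadC
    calc μ * x e.snd - (d : ℂ) * (ν⁻¹ * x e.snd) - W e.snd e.fst * x e.fst + ν⁻¹ * x e.snd
        = (μ - ((d : ℂ) - 1) * ν⁻¹) * x e.snd - W e.snd e.fst * x e.fst := by ring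
      _ = ν * x e.snd - W e.snd e.fst * x e.fst := by rw [hquad']
      _ = ν * (x e.snd - ν⁻¹ * W e.snd e.fst * x e.fst) := by
          rw [mul_sub]
          congr 1
          calc W e.snd e.fst * x e.fst = 1 * (W e.snd e.fst * x e.fst) := by ring
            _ = ν * ν⁻¹ * (W e.snd e.fst * x e.fst) := by rw [hinv]
            _ = ν * (ν⁻¹ * W e.snd e.fst * x e.fst) := by ring
  -- y is nonzero
  have hy0 : y ≠ 0 := by
    intro hy
    obtain ⟨v₀, hv₀⟩ : ∃ v, x v ≠ 0 := by
      by_contra hcon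
      push_neg at hcon
      exact hx0 (funext hcon)
    have hdeg : 0 < G.degree v₀ := by rw [hreg]; omega
    obtain ⟨u₀, hu₀⟩ := (G.degree_pos_iff_exists_adj v₀).mp hdeg
    have hadj : G.Adj u₀ v₀ := hu₀.symm
    set d₁ : G.Dart := ⟨(u₀, v₀), hadj⟩ with hd₁
    set d₂ : G.Dart := ⟨(v₀, u₀), hadj.symm⟩ with hd₂
    have hy₁ : x v₀ - ν⁻¹ * W u₀ v₀ * x u₀ = 0 := by
      have := congrFun hy d₁
      simpa [hydef, hd₁] using this
    have hy₂ : x u₀ - ν⁻¹ * W v₀ u₀ * x v₀ = 0 := by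
      have := congrFun hy d₂
      simpa [hydef, hd₂] using this
    have hxv : x v₀ = ν⁻¹ * W u₀ v₀ * x u₀ := sub_eq_zero.mp hy₁
    have hxu : x u₀ = ν⁻¹ * W v₀ u₀ * x v₀ := sub_eq_zero.mp hy₂
    have hWs : W u₀ v₀ * W v₀ u₀ = 1 := by rw [hWsymm v₀ u₀]; exact hWsq u₀ v₀
    have hkey : x v₀ = ν⁻¹ * ν⁻¹ * x v₀ := by
      calc x v₀ = ν⁻¹ * W u₀ v₀ * (ν⁻¹ * W v₀ u₀ * x v₀) := by rw [← hxu, ← hxv]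
        _ = (W u₀ v₀ * W v₀ u₀) * (ν⁻¹ * ν⁻¹ * x v₀) := by ring
        _ = ν⁻¹ * ν⁻¹ * x v₀ := by rw [hWs]; ring
    have hν2 : ν⁻¹ * ν⁻¹ = 1 := by
      have hz := sub_eq_zero.mpr hkey.symm
      have hfac : (ν⁻¹ * ν⁻¹ - 1) * x v₀ = 0 := by linear_combination hz
      rcases mul_eq_zero.mp hfac with h | h
      · exact sub_eq_zero.mp h
      · exact absurd h hv₀
    have h1 : ‖ν‖⁻¹ * ‖ν‖⁻¹ = 1 := by
      rw [← norm_inv, ← norm_mul, hν2, norm_one]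
    rw [hνabs] at h1
    have hrr : r * r = 1 := by
      field_simp at h1
      nlinarith [h1]
    nlinarith [hr1]
  -- conclude
  refine ⟨ν, (spec_iff _ ν).mpr ⟨y, hy0, heig⟩, ?_⟩
  rw [hνabs]
  exact hrval

end NearRamanujan
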